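/- Let R be a Noetherian commutative ring that is locally approximately Gorenstein, and let f ∈ R[[x₁,…,xₙ]] be a power series that is Gaussian over R, where the content c(f) is the ideal of R generated by the coefficients of f. Then c(f) is locally principal. -/

import Mathlib

/-- An Artinian local ring is Gorenstein iff its socle (the annihilator of the maximal
ideal) is one-dimensional over the residue field, i.e. generated by one nonzero element. -/
def IsArtinianGorensteinLocal (A : Type*) [CommRing A] : Prop :=
  IsArtinianRing A ∧ ∃ h : IsLocalRing A, ∃ x : A, x ≠ 0 ∧
    Submodule.annihilator (@IsLocalRing.maximalIdeal A _ h) = Ideal.span {x}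

/-- A Noetherian local ring `(A,m)` is approximately Gorenstein if for every `N` there is
an `m`-primary ideal `I ⊆ m^N` such that `A/I` is Gorenstein. -/
def IsApproximatelyGorenstein (A : Type*) [CommRing A] [IsLocalRing A] : Prop :=
  ∀ N : ℕ, ∃ I : Ideal A, I ≤ IsLocalRing.maximalIdeal A ^ N ∧ I.IsPrimary ∧
    I.radical = IsLocalRing.maximalIdeal A ∧ IsArtinianGorensteinLocal (A ⧸ I)

/-- `R` is locally approximately Gorenstein if each localization at a maximal ideal is
approximately Gorenstein. -/
def IsLocallyApproximatelyGorenstein (R : Type*) [CommRing R] : Prop :=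
  ∀ (m : Ideal R) (_ : m.IsMaximal),
    IsApproximatelyGorenstein (Localization m.primeCompl)

/-- The content of a multivariate formal power series: the ideal of `R` generated by its
coefficients. -/
noncomputable def psContent {R : Type*} [CommRing R] {n : ℕ}
    (f : MvPowerSeries (Fin n) R) : Ideal R :=
  Ideal.span (Set.range fun d => MvPowerSeries.coeff d f)


namespace GPAux

section Content

variable {R S' : Type*} [CommRing R] [CommRing S'] {n : ℕ}

lemma psContent_eq_span (f : MvPowerSeries (Fin n) R) :
    psContent f = Ideal.span (Set.range fun d => MvPowerSeries.coeff d f) := rfl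

lemma coeff_mem_psContent (f : MvPowerSeries (Fin n) R) (d : Fin n →₀ ℕ) :
    MvPowerSeries.coeff d f ∈ psContent f :=
  Ideal.subset_span ⟨d, rfl⟩

lemma psContent_zero : psContent (0 : MvPowerSeries (Fin n) R) = ⊥ := by
  rw [psContent_eq_span, Ideal.span_eq_bot]
  rintro x ⟨d, rfl⟩
  simp

lemma psContent_map (φ : R →+* S') (f : MvPowerSeries (Fin n) R) :
    psContent (MvPowerSeries.map φ f) = Ideal.map φ (psContent f) := by
  have h : (fun d => MvPowerSeries.coeff d (MvPowerSeries.map φ f)) =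
      fun d => φ (MvPowerSeries.coeff d f) := by
    funext d; exact MvPowerSeries.coeff_map _ _ _
  rw [psContent_eq_span, psContent_eq_span, Ideal.map_span, h, ← Set.range_comp]
  rfl

lemma gaussian_of_surjective (φ : R →+* S') (hφ : Function.Surjective φ)
    (f : MvPowerSeries (Fin n) R)
    (hf : ∀ g, psContent (f * g) = psContent f * psContent g) :
    ∀ g', psContent (MvPowerSeries.map φ f * g') =
      psContent (MvPowerSeries.map φ f) * psContent g' := by
  intro g'
  set g : MvPowerSeries (Fin n) R :=
    fun d => Function.surjInv hφ (MvPowerSeries.coeff d g') with hgdef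
  have hg : MvPowerSeries.map φ g = g' := by
    ext d
    rw [MvPowerSeries.coeff_map]
    rw [MvPowerSeries.coeff_apply]
    exact Function.surjInv_eq hφ _
  rw [← hg, ← map_mul, psContent_map, hf, Ideal.map_mul, psContent_map, psContent_map]

end Content

section LocalAux

variable {A : Type*} [CommRing A]

lemma le_of_le_sup_smul {M c J : Ideal A} {s : ℕ} (hM : M ^ s = ⊥)
    (h : c ≤ M * c ⊔ J) : c ≤ J := by
  have key : ∀ t : ℕ, c ≤ M ^ t * c ⊔ J := by
    intro t
    induction t with
    | zero => rw [pow_zero, one_mul]; exact le_sup_left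
    | succ t ih =>
      have h1 : M * c ≤ M ^ (t + 1) * c ⊔ J := by
        calc M * c ≤ M * (M ^ t * c ⊔ J) := Ideal.mul_mono_right ih
          _ = M * (M ^ t * c) ⊔ M * J := Ideal.mul_sup _ _ _
          _ ≤ M ^ (t + 1) * c ⊔ J := by
              apply sup_le_sup _ Ideal.mul_le_right
              rw [← mul_assoc, ← pow_succ']
      calc c ≤ M * c ⊔ J := h
        _ ≤ (M ^ (t + 1) * c ⊔ J) ⊔ J := sup_le_sup_right h1 J
        _ = M ^ (t + 1) * c ⊔ J := by rw [sup_assoc, sup_idem]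
  have := key s
  rwa [hM, Ideal.bot_mul, bot_sup_eq] at this

lemma local_span_finset [IsLocalRing A] (T : Finset A) (hT : T.Nonempty)
    (hP : (Ideal.span (T : Set A)).IsPrincipal) :
    ∃ a ∈ T, Ideal.span (T : Set A) = Ideal.span {a} := by
  obtain ⟨b, hb0⟩ := hP
  have hb : Ideal.span (T : Set A) = Ideal.span {b} := hb0
  have hbmem : b ∈ Ideal.span (T : Set A) := by
    rw [hb]; exact Ideal.mem_span_singleton_self b
  obtain ⟨r, -, hr⟩ := Submodule.mem_span_finset.mp hbmem
  have ha : ∀ a ∈ T, ∃ sa : A, sa * b = a := fun a haT =>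
    Ideal.mem_span_singleton'.mp (hb ▸ Ideal.subset_span haT)
  choose! s hs using ha
  by_cases hu : ∃ a ∈ T, IsUnit (s a)
  · obtain ⟨a, haT, hua⟩ := hu
    refine ⟨a, haT, le_antisymm ?_ ?_⟩
    · rw [hb, Ideal.span_le, Set.singleton_subset_iff]
      refine Ideal.mem_span_singleton'.mpr ⟨↑hua.unit⁻¹, ?_⟩
      calc (↑hua.unit⁻¹ : A) * a = ↑hua.unit⁻¹ * (s a * b) := by rw [hs a haT]
        _ = (↑hua.unit⁻¹ * ↑hua.unit) * b := by rw [IsUnit.unit_spec, mul_assoc]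
        _ = b := by rw [Units.inv_mul, one_mul]
    · rw [Ideal.span_le, Set.singleton_subset_iff]
      exact Ideal.subset_span haT
  · push_neg at hu
    set u := ∑ i ∈ T, r i * s i with hudef
    have hub : u * b = b := by
      rw [Finset.sum_mul]
      conv_rhs => rw [← hr]
      apply Finset.sum_congr rfl
      intro i hi
      rw [smul_eq_mul, mul_assoc, hs i hi]
    have hu' : u ∈ IsLocalRing.maximalIdeal A := by
      apply Ideal.sum_mem
      intro i hi
      exact Ideal.mul_mem_left _ _ ((IsLocalRing.mem_maximalIdeal _).mpr (hu i hi))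
    have hunit : IsUnit (1 - u) :=
      IsLocalRing.isUnit_one_sub_self_of_mem_nonunits u
        ((IsLocalRing.mem_maximalIdeal _).mp hu')
    have hb0 : b = 0 := by
      have h0 : (1 - u) * b = 0 := by rw [sub_mul, one_mul, hub, sub_self]
      calc b = ↑hunit.unit⁻¹ * (↑hunit.unit * b) := by
              rw [← mul_assoc, Units.inv_mul, one_mul]
        _ = ↑hunit.unit⁻¹ * ((1 - u) * b) := by rw [IsUnit.unit_spec]
        _ = 0 := by rw [h0, mul_zero]
    obtain ⟨a0, ha0⟩ := hT
    refine ⟨a0, ha0, ?_⟩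
    have ha00 : a0 = 0 := by rw [← hs a0 ha0, hb0, mul_zero]
    have : ∀ a ∈ T, a = 0 := fun a haT => by rw [← hs a haT, hb0, mul_zero]
    rw [hb, hb0, ha00]

end LocalAux


section JH

variable {A : Type*} [CommRing A]

/-- A finite chain of covers from `P` to `Q`, presented as an eventually-constant
function `ℕ → Ideal A`. -/
structure CChain (P Q : Ideal A) : Type _ where
  t : ℕ
  h : ℕ → Ideal A
  h0 : h 0 = P
  hconst : ∀ i, t ≤ i → h i = Q
  hcov : ∀ i, i < t → h i ⋖ h (i + 1)

namespace CChain

variable {P Q R' : Ideal A}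

lemma ht (c : CChain P Q) : c.h c.t = Q := c.hconst _ le_rfl

lemma mono (c : CChain P Q) : ∀ i j, i ≤ j → c.h i ≤ c.h j := by
  have key : ∀ i k, c.h i ≤ c.h (i + k) := by
    intro i k
    induction k with
    | zero => exact le_rfl
    | succ k ih =>
      refine ih.trans ?_
      by_cases hik : i + k < c.t
      · exact (c.hcov _ hik).le
      · rw [c.hconst _ (by omega), c.hconst _ (by omega)]
  intro i j hij
  have := key i (j - i)
  rwa [show i + (j - i) = j by omega] at this

/-- Concatenation of chains. -/
def paste (c₁ : CChain P Q) (c₂ : CChain Q R') : CChain P R' where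
  t := c₁.t + c₂.t
  h := fun i => if i ≤ c₁.t then c₁.h i else c₂.h (i - c₁.t)
  h0 := by simp [c₁.h0]
  hconst := by
    intro i hi
    by_cases h : i ≤ c₁.t
    · have h1 : i = c₁.t := by omega
      have h2 : c₂.t = 0 := by omega
      rw [if_pos h, h1, c₁.ht, ← c₂.h0, c₂.hconst 0 (by omega)]
    · rw [if_neg h, c₂.hconst _ (by omega)]
  hcov := by
    intro i hi
    by_cases h1 : i + 1 ≤ c₁.t
    · rw [if_pos (by omega : i ≤ c₁.t), if_pos h1]
      exact c₁.hcov i (by omega)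
    · by_cases h2 : i ≤ c₁.t
      · have h3 : i = c₁.t := by omega
        rw [if_pos h2, if_neg h1, h3, c₁.ht]
        have hc := c₂.hcov 0 (by omega)
        rw [c₂.h0] at hc
        simpa using hc
      · rw [if_neg h2, if_neg h1, show i + 1 - c₁.t = i - c₁.t + 1 by omega]
        exact c₂.hcov _ (by omega)

lemma paste_t (c₁ : CChain P Q) (c₂ : CChain Q R') : (c₁.paste c₂).t = c₁.t + c₂.t := rfl

lemma paste_left (c₁ : CChain P Q) (c₂ : CChain Q R') {i : ℕ} (hi : i ≤ c₁.t) :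
    (c₁.paste c₂).h i = c₁.h i := if_pos hi

lemma paste_right (c₁ : CChain P Q) (c₂ : CChain Q R') {i : ℕ} (hi : c₁.t ≤ i) :
    (c₁.paste c₂).h i = c₂.h (i - c₁.t) := by
  by_cases h : i ≤ c₁.t
  · have h1 : i = c₁.t := by omega
    show (if i ≤ c₁.t then c₁.h i else c₂.h (i - c₁.t)) = _
    rw [if_pos h, h1, c₁.ht, Nat.sub_self, c₂.h0]
  · exact if_neg h

lemma pos_of_ne (c : CChain P Q) (hne : P ≠ Q) : 1 ≤ c.t := by
  by_contra h
  exact hne (by rw [← c.h0, c.hconst 0 (by omega)])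

end CChain

variable [IsArtinianRing A] [IsNoetherianRing A]

lemma exists_cchain (P Q : Ideal A) (hPQ : P ≤ Q) : Nonempty (CChain P Q) := by
  have wfGT : WellFounded ((· > ·) : Ideal A → Ideal A → Prop) :=
    isNoetherian_iff.mp inferInstance
  refine WellFounded.induction wfGT (C := fun P => P ≤ Q → Nonempty (CChain P Q)) P ?_ hPQ
  intro P ih hPQ
  by_cases hPQ' : P = Q
  · subst hPQ'
    exact ⟨⟨0, fun _ => P, rfl, fun i _ => rfl, fun i h => absurd h (Nat.not_lt_zero i)⟩⟩
  · have hne : {Z : Ideal A | P < Z ∧ Z ≤ Q}.Nonempty :=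
      ⟨Q, lt_of_le_of_ne hPQ hPQ', le_rfl⟩
    have wfLT : WellFounded ((· < ·) : Ideal A → Ideal A → Prop) :=
      (isArtinian_iff A A).mp inferInstance
    obtain ⟨Y, ⟨hPY, hYQ⟩, hmin⟩ := wfLT.has_min _ hne
    have hcov : P ⋖ Y := ⟨hPY, fun W hPW hWY => hmin W ⟨hPW, hWY.le.trans hYQ⟩ hWY⟩
    obtain ⟨cc⟩ := ih Y hPY hYQ
    refine ⟨⟨cc.t + 1, fun i => Nat.casesOn i P (fun j => cc.h j), rfl, ?_, ?_⟩⟩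
    · intro i hi
      match i, hi with
      | (j + 1), hi => exact cc.hconst j (by omega)
    · intro i hi
      match i with
      | 0 => simpa [cc.h0] using hcov
      | (j + 1) => exact cc.hcov j (by omega)

omit [IsArtinianRing A] [IsNoetherianRing A] in
lemma condense (nn : ℕ) (g : ℕ → Ideal A)
    (hg : ∀ i, i < nn → g i ⋖ g (i + 1) ∨ g i = g (i + 1)) :
    ∃ s : CompositionSeries (Submodule A A), s.head = g 0 ∧ s.last = g nn ∧
      ((∀ i, i < nn → g i ⋖ g (i + 1)) → s.length = nn) ∧ s.length ≤ nn ∧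
      ((∃ i, i < nn ∧ g i = g (i + 1)) → s.length < nn) := by
  induction nn with
  | zero =>
    exact ⟨RelSeries.singleton _ (g 0), rfl, rfl, fun _ => rfl, le_rfl,
      by rintro ⟨i, hi, -⟩; omega⟩
  | succ nn ih =>
    obtain ⟨s, hh, hl, hexact, hle, hlt⟩ := ih (fun i hi => hg i (by omega))
    rcases hg nn (by omega) with hcov | heq
    · have hrel : JordanHolderLattice.IsMaximal s.last (g (nn + 1)) := by
        rw [hl]; exact hcov
      refine ⟨s.snoc (g (nn + 1)) hrel, by simpa using hh, by simp, ?_, ?_, ?_⟩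
      · intro hall
        have := hexact (fun i hi => hall i (by omega))
        simp only [RelSeries.snoc_length]
        omega
      · simp only [RelSeries.snoc_length]; omega
      · rintro ⟨i, hi, hieq⟩
        have hine : i ≠ nn := by
          rintro rfl
          exact hcov.lt.ne hieq
        have := hlt ⟨i, by omega, hieq⟩
        simp only [RelSeries.snoc_length]
        omega
    · refine ⟨s, hh, by rw [hl, heq], ?_, by omega, fun _ => by omega⟩
      intro hall
      exact absurd heq (hall nn (by omega)).lt.ne

end JH



section Socle

variable {A : Type*} [CommRing A] [IsLocalRing A]

lemma socle_mul_eq_zero {x₀ : A}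
    (hx : Submodule.annihilator (IsLocalRing.maximalIdeal A) = Ideal.span {x₀}) :
    ∀ α ∈ IsLocalRing.maximalIdeal A, α * x₀ = 0 := by
  intro α hα
  have hx₀ : x₀ ∈ Submodule.annihilator (IsLocalRing.maximalIdeal A) := by
    rw [hx]; exact Ideal.mem_span_singleton_self x₀
  have := Submodule.mem_annihilator.mp hx₀ α hα
  rw [smul_eq_mul] at this
  rw [mul_comm]
  exact this

lemma socle_gen {x₀ : A}
    (hx : Submodule.annihilator (IsLocalRing.maximalIdeal A) = Ideal.span {x₀})
    {y : A} (hy : y ∈ Ideal.span {x₀}) (hyne : y ≠ 0) :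
    Ideal.span {x₀} = Ideal.span ({y} : Set A) := by
  obtain ⟨lam, hlam⟩ := Ideal.mem_span_singleton'.mp hy
  have hlu : IsUnit lam := by
    by_contra h
    have : lam ∈ IsLocalRing.maximalIdeal A := (IsLocalRing.mem_maximalIdeal _).mpr h
    exact hyne (by rw [← hlam, socle_mul_eq_zero hx lam this])
  apply le_antisymm
  · rw [Ideal.span_le, Set.singleton_subset_iff]
    refine Ideal.mem_span_singleton'.mpr ⟨↑hlu.unit⁻¹, ?_⟩
    calc (↑hlu.unit⁻¹ : A) * y = ↑hlu.unit⁻¹ * (lam * x₀) := by rw [hlam]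
      _ = (↑hlu.unit⁻¹ * ↑hlu.unit) * x₀ := by rw [IsUnit.unit_spec, mul_assoc]
      _ = x₀ := by rw [Units.inv_mul, one_mul]
  · rw [Ideal.span_le, Set.singleton_subset_iff]
    exact hy

lemma dual_step {x₀ : A} (hMnil : ∃ s : ℕ, (IsLocalRing.maximalIdeal A) ^ s = ⊥)
    (hx : Submodule.annihilator (IsLocalRing.maximalIdeal A) = Ideal.span {x₀})
    {K J : Ideal A} (hcov : K ⋖ J) :
    Submodule.annihilator J = Submodule.annihilator K ∨
      Submodule.annihilator J ⋖ Submodule.annihilator K := by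
  set M := IsLocalRing.maximalIdeal A with hM
  have hle : Submodule.annihilator J ≤ Submodule.annihilator K :=
    Submodule.annihilator_mono hcov.le
  have hMJ : M * J ≤ K := by
    rcases hcov.wcovBy.eq_or_eq (le_sup_left : K ≤ K ⊔ M * J)
        (sup_le hcov.le Ideal.mul_le_right) with hX | hX
    · exact le_sup_right.trans hX.le
    · exfalso
      obtain ⟨s, hs⟩ := hMnil
      have hJK : J ≤ K := le_of_le_sup_smul hs (by rw [sup_comm, hX])
      exact hcov.lt.not_ge hJK
  obtain ⟨a, haJ, haK⟩ := SetLike.exists_of_lt hcov.lt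
  have hsupa : K ⊔ Ideal.span {a} = J := by
    rcases hcov.wcovBy.eq_or_eq (le_sup_left : K ≤ K ⊔ Ideal.span {a})
        (sup_le hcov.le ((Ideal.span_le).mpr (Set.singleton_subset_iff.mpr haJ))) with h | h
    · exfalso
      have hmem : a ∈ K ⊔ Ideal.span {a} :=
        Submodule.mem_sup_right (Ideal.mem_span_singleton_self a)
      rw [h] at hmem
      exact haK hmem
    · exact h
  have key : ∀ r ∈ Submodule.annihilator K, r * a = 0 → r ∈ Submodule.annihilator J := by
    intro r hrK hra
    rw [Submodule.mem_annihilator] at hrK ⊢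
    intro b hbJ
    rw [← hsupa] at hbJ
    obtain ⟨k, hk, z, hz, rfl⟩ := Submodule.mem_sup.mp hbJ
    obtain ⟨β, rfl⟩ := Ideal.mem_span_singleton'.mp hz
    have h1 : r * k = 0 := by simpa [smul_eq_mul] using hrK k hk
    rw [smul_eq_mul]
    calc r * (k + β * a) = r * k + β * (r * a) := by ring
      _ = 0 := by rw [h1, hra, mul_zero, add_zero]
  have hsoc : ∀ r ∈ Submodule.annihilator K, r * a ∈ Ideal.span {x₀} := by
    intro r hr
    rw [← hx, Submodule.mem_annihilator]
    intro α hα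
    have h1 : α * a ∈ K := hMJ (Ideal.mul_mem_mul hα haJ)
    have h2 : r • (α * a) = 0 := Submodule.mem_annihilator.mp hr _ h1
    rw [smul_eq_mul] at h2
    rw [smul_eq_mul]
    calc r * a * α = r * (α * a) := by ring
      _ = 0 := h2
  by_cases hD : Submodule.annihilator J = Submodule.annihilator K
  · exact Or.inl hD
  right
  refine ⟨lt_of_le_of_ne hle hD, ?_⟩
  intro X hX1 hX2
  obtain ⟨r₁, hr₁X, hr₁D⟩ := SetLike.exists_of_lt hX1
  have hr₁K : r₁ ∈ Submodule.annihilator K := hX2.le hr₁X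
  have hr₁a : r₁ * a ≠ 0 := fun h => hr₁D (key r₁ hr₁K h)
  have hgen : Ideal.span {x₀} = Ideal.span ({r₁ * a} : Set A) :=
    socle_gen hx (hsoc r₁ hr₁K) hr₁a
  have hKX : Submodule.annihilator K ≤ X := by
    intro r₂ hr₂
    have h1 : r₂ * a ∈ Ideal.span ({r₁ * a} : Set A) := hgen ▸ hsoc r₂ hr₂
    obtain ⟨β, hβ⟩ := Ideal.mem_span_singleton'.mp h1
    have hdiff : r₂ - β * r₁ ∈ Submodule.annihilator J := by
      refine key _ (sub_mem hr₂ (Ideal.mul_mem_left _ β hr₁K)) ?_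
      calc (r₂ - β * r₁) * a = r₂ * a - β * (r₁ * a) := by ring
        _ = 0 := by rw [← hβ]; ring
    have hsum : r₂ = (r₂ - β * r₁) + β * r₁ := by ring
    rw [hsum]
    exact X.add_mem (hX1.le hdiff) (X.mul_mem_left β hr₁X)
  exact hX2.not_ge hKX

end Socle


section NoMiddle

variable {A : Type*} [CommRing A] [IsArtinianRing A] [IsNoetherianRing A] [IsLocalRing A]

lemma ann_top_eq_bot : Submodule.annihilator (⊤ : Ideal A) = ⊥ := by
  ext r
  simp only [Submodule.mem_annihilator, Ideal.mem_bot]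
  constructor
  · intro h
    simpa using h 1 trivial
  · rintro rfl
    intro n _
    simp

lemma no_middle {x₀ : A} (hMnil : ∃ s : ℕ, (IsLocalRing.maximalIdeal A) ^ s = ⊥)
    (hx : Submodule.annihilator (IsLocalRing.maximalIdeal A) = Ideal.span {x₀})
    (c₁ c₂ : Ideal A) (h12 : c₁ ≤ c₂)
    (hW : ∀ X : Ideal A, ¬ (Submodule.annihilator c₂ < X ∧ X < Submodule.annihilator c₁)) :
    ∀ X : Ideal A, ¬ (c₁ < X ∧ X < c₂) := by
  rintro X ⟨h1, h2⟩
  obtain ⟨ca⟩ := exists_cchain ⊥ c₁ bot_le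
  obtain ⟨cb⟩ := exists_cchain c₁ X h1.le
  obtain ⟨cc'⟩ := exists_cchain X c₂ h2.le
  obtain ⟨cd⟩ := exists_cchain c₂ ⊤ le_top
  set ch := ca.paste (cb.paste (cc'.paste cd)) with hch
  set L := ch.t with hL
  have hLval : L = ca.t + (cb.t + (cc'.t + cd.t)) := rfl
  have htb : 1 ≤ cb.t := cb.pos_of_ne h1.ne
  have htc : 1 ≤ cc'.t := cc'.pos_of_ne h2.ne
  set j₁ := ca.t with hj₁
  set j₂ := ca.t + cb.t + cc'.t with hj₂
  have hj₂L : j₂ ≤ L := by omega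
  have hval₁ : ch.h j₁ = c₁ := by
    rw [hch, CChain.paste_left _ _ (le_rfl : j₁ ≤ ca.t), ca.ht]
  have hval₂ : ch.h j₂ = c₂ := by
    rw [hch, CChain.paste_right _ _ (by omega : ca.t ≤ j₂),
      show j₂ - ca.t = cb.t + cc'.t by omega,
      CChain.paste_right _ _ (by omega : cb.t ≤ cb.t + cc'.t),
      show cb.t + cc'.t - cb.t = cc'.t by omega,
      CChain.paste_left _ _ (le_rfl : cc'.t ≤ cc'.t), cc'.ht]
  set g : ℕ → Ideal A := fun i => Submodule.annihilator (ch.h (L - i)) with hg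
  have hgstep : ∀ i, i < L → g i ⋖ g (i + 1) ∨ g i = g (i + 1) := by
    intro i hi
    have hcov := ch.hcov (L - (i + 1)) (by omega)
    rw [show L - (i + 1) + 1 = L - i by omega] at hcov
    rcases dual_step hMnil hx hcov with h | h
    · right
      rw [hg]
      exact h
    · left
      rw [hg]
      exact h
  set i₀ := L - j₂ with hi₀
  have hj₂2 : 2 ≤ j₂ := by omega
  have hg0 : g i₀ = Submodule.annihilator c₂ := by
    rw [hg]
    dsimp only
    rw [show L - i₀ = j₂ by omega, hval₂]
  have hup : g (i₀ + 2) ≤ Submodule.annihilator c₁ := by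
    have hmono : ch.h j₁ ≤ ch.h (L - (i₀ + 2)) := ch.mono _ _ (by omega)
    rw [hval₁] at hmono
    exact Submodule.annihilator_mono hmono
  have heqstep : (g i₀ = g (i₀ + 1)) ∨ (g (i₀ + 1) = g (i₀ + 2)) := by
    by_contra hcon
    push_neg at hcon
    have hc1 : g i₀ ⋖ g (i₀ + 1) := (hgstep i₀ (by omega)).resolve_right hcon.1
    have hc2 : g (i₀ + 1) ⋖ g (i₀ + 2) := (hgstep (i₀ + 1) (by omega)).resolve_right hcon.2
    exact hW (g (i₀ + 1)) ⟨hg0 ▸ hc1.lt, lt_of_lt_of_le hc2.lt hup⟩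
  obtain ⟨s₁, hs₁h, hs₁l, hs₁len, -, -⟩ := condense L ch.h (fun i hi => Or.inl (ch.hcov i hi))
  obtain ⟨s₂, hs₂h, hs₂l, -, -, hs₂lt⟩ := condense L g hgstep
  have hlen1 : s₁.length = L := hs₁len (fun i hi => ch.hcov i hi)
  have hlen2 : s₂.length < L := by
    apply hs₂lt
    rcases heqstep with h | h
    · exact ⟨i₀, by omega, h⟩
    · exact ⟨i₀ + 1, by omega, h⟩
  have e1h : s₁.head = ⊥ := by rw [hs₁h, ch.h0]
  have e1l : s₁.last = ⊤ := by rw [hs₁l, ch.hconst L le_rfl]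
  have e2h : s₂.head = ⊥ := by
    rw [hs₂h, hg]
    dsimp only
    rw [Nat.sub_zero, ch.hconst L le_rfl]
    exact ann_top_eq_bot
  have e2l : s₂.last = ⊤ := by
    rw [hs₂l, hg]
    dsimp only
    rw [Nat.sub_self, ch.h0]
    exact Submodule.annihilator_bot
  have := (CompositionSeries.jordan_holder s₁ s₂ (by rw [e1h, e2h]) (by rw [e1l, e2l])).length_eq
  omega

end NoMiddle


section Wronskian

variable {A : Type*} [CommRing A] [IsLocalRing A] {n : ℕ}

lemma kill_content {f : MvPowerSeries (Fin n) A} {r : A}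
    (h : ∀ d, r * MvPowerSeries.coeff d f = 0) :
    ∀ a ∈ psContent f, r * a = 0 := by
  intro a ha
  rw [psContent_eq_span] at ha
  induction ha using Submodule.span_induction with
  | mem x hx =>
    obtain ⟨d, rfl⟩ := hx
    exact h d
  | zero => rw [mul_zero]
  | add x y hx hy ihx ihy => rw [mul_add, ihx, ihy, add_zero]
  | smul t x hx ih => rw [smul_eq_mul, ← mul_assoc, mul_comm r t, mul_assoc, ih, mul_zero]

lemma wronskian {x₀ : A}
    (hx : Submodule.annihilator (IsLocalRing.maximalIdeal A) = Ideal.span {x₀})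
    {f : MvPowerSeries (Fin n) A}
    (hf : ∀ g, psContent (f * g) = psContent f * psContent g) (r r' : A)
    (hr : r ∈ Submodule.annihilator (IsLocalRing.maximalIdeal A * psContent f))
    (hr' : r' ∈ Submodule.annihilator (IsLocalRing.maximalIdeal A * psContent f)) :
    ∃ u v : A, (IsUnit u ∨ IsUnit v) ∧ ∀ a ∈ psContent f, (u * r + v * r') * a = 0 := by
  have hsoc : ∀ w : A, w ∈ Submodule.annihilator (IsLocalRing.maximalIdeal A * psContent f) →
      ∀ d, w * MvPowerSeries.coeff d f ∈ Ideal.span {x₀} := by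
    intro w hw d
    rw [← hx, Submodule.mem_annihilator]
    intro α hα
    have h1 : α * MvPowerSeries.coeff d f ∈ IsLocalRing.maximalIdeal A * psContent f :=
      Ideal.mul_mem_mul hα (coeff_mem_psContent f d)
    have h2 := Submodule.mem_annihilator.mp hw _ h1
    rw [smul_eq_mul] at h2 ⊢
    calc w * MvPowerSeries.coeff d f * α = w * (α * MvPowerSeries.coeff d f) := by ring
      _ = 0 := h2
  choose lam hlam using fun d => Ideal.mem_span_singleton'.mp (hsoc r hr d)
  choose lam' hlam' using fun d => Ideal.mem_span_singleton'.mp (hsoc r' hr' d)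
  by_cases hcase : ∀ d, r * MvPowerSeries.coeff d f = 0
  · refine ⟨1, 0, Or.inl isUnit_one, fun a ha => ?_⟩
    have h1 := kill_content hcase a ha
    calc (1 * r + 0 * r') * a = r * a := by ring
      _ = 0 := h1
  · push_neg at hcase
    obtain ⟨d₀, hd₀⟩ := hcase
    set g : MvPowerSeries (Fin n) A := fun d => lam' d * r - lam d * r' with hgdef
    have hgcoeff : ∀ d, MvPowerSeries.coeff d g = lam' d * r - lam d * r' := fun d => rfl
    have hfg : f * g = 0 := by
      ext e
      rw [MvPowerSeries.coeff_mul, map_zero]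
      have hterm : ∀ p ∈ Finset.HasAntidiagonal.antidiagonal e,
          MvPowerSeries.coeff p.1 f * MvPowerSeries.coeff p.2 g
            = (lam' p.2 * lam p.1 - lam p.2 * lam' p.1) * x₀ := by
        intro p _
        rw [hgcoeff]
        calc MvPowerSeries.coeff p.1 f * (lam' p.2 * r - lam p.2 * r')
            = lam' p.2 * (r * MvPowerSeries.coeff p.1 f)
              - lam p.2 * (r' * MvPowerSeries.coeff p.1 f) := by ring
          _ = lam' p.2 * (lam p.1 * x₀) - lam p.2 * (lam' p.1 * x₀) := by
              rw [hlam, hlam']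
          _ = (lam' p.2 * lam p.1 - lam p.2 * lam' p.1) * x₀ := by ring
      rw [Finset.sum_congr rfl hterm, ← Finset.sum_mul]
      have hzero : (∑ p ∈ Finset.HasAntidiagonal.antidiagonal e, (lam' p.2 * lam p.1 - lam p.2 * lam' p.1)) = 0 := by
        rw [Finset.sum_sub_distrib, sub_eq_zero]
        refine Finset.sum_equiv (Equiv.prodComm _ _) (fun p => ?_) (fun p _ => ?_)
        · exact Finset.HasAntidiagonal.swap_mem_antidiagonal.symm
        · simp [mul_comm]
      rw [hzero, zero_mul]
    have h0 : psContent f * psContent g = ⊥ := by rw [← hf g, hfg, psContent_zero]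
    have hunit : IsUnit (lam d₀) := by
      by_contra h
      have hmem : lam d₀ ∈ IsLocalRing.maximalIdeal A :=
        (IsLocalRing.mem_maximalIdeal _).mpr h
      exact hd₀ (by rw [← hlam d₀, socle_mul_eq_zero hx _ hmem])
    refine ⟨-(lam' d₀), lam d₀, Or.inr hunit, fun a ha => ?_⟩
    have hga : a * MvPowerSeries.coeff d₀ g ∈ psContent f * psContent g :=
      Ideal.mul_mem_mul ha (coeff_mem_psContent g d₀)
    rw [h0] at hga
    have hga0 : a * (lam' d₀ * r - lam d₀ * r') = 0 := by
      rw [← hgcoeff]; exact Ideal.mem_bot.mp hga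
    calc (-(lam' d₀) * r + lam d₀ * r') * a = -(a * (lam' d₀ * r - lam d₀ * r')) := by ring
      _ = 0 := by rw [hga0, neg_zero]

lemma wronskian_collapse {x₀ : A}
    (hx : Submodule.annihilator (IsLocalRing.maximalIdeal A) = Ideal.span {x₀})
    {f : MvPowerSeries (Fin n) A}
    (hf : ∀ g, psContent (f * g) = psContent f * psContent g) :
    ∀ X : Ideal A, ¬ (Submodule.annihilator (psContent f) < X ∧
      X < Submodule.annihilator (IsLocalRing.maximalIdeal A * psContent f)) := by
  rintro X ⟨h1, h2⟩
  obtain ⟨r, hrX, hrD⟩ := SetLike.exists_of_lt h1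
  obtain ⟨r', hr'D, hr'X⟩ := SetLike.exists_of_lt h2
  obtain ⟨u, v, huv, hkill⟩ := wronskian hx hf r r' (h2.le hrX) hr'D
  have hmem : u * r + v * r' ∈ Submodule.annihilator (psContent f) := by
    rw [Submodule.mem_annihilator]
    intro a ha
    rw [smul_eq_mul]
    exact hkill a ha
  by_cases hv : IsUnit v
  · apply hr'X
    have h3 : v * r' ∈ X := by
      have h4 : v * r' = (u * r + v * r') - u * r := by ring
      rw [h4]
      exact Submodule.sub_mem _ (h1.le hmem) (X.mul_mem_left u hrX)
    have h5 : r' = ↑hv.unit⁻¹ * (v * r') := by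
      rw [← mul_assoc]
      nth_rewrite 2 [← IsUnit.unit_spec hv]
      rw [Units.inv_mul, one_mul]
    rw [h5]
    exact X.mul_mem_left _ h3
  · have hu : IsUnit u := huv.resolve_right hv
    have hvM : v ∈ IsLocalRing.maximalIdeal A := (IsLocalRing.mem_maximalIdeal _).mpr hv
    have hvr' : v * r' ∈ Submodule.annihilator (psContent f) := by
      rw [Submodule.mem_annihilator]
      intro a ha
      have h1' : v * a ∈ IsLocalRing.maximalIdeal A * psContent f := Ideal.mul_mem_mul hvM ha
      have h2' := Submodule.mem_annihilator.mp hr'D _ h1'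
      rw [smul_eq_mul] at h2' ⊢
      calc v * r' * a = r' * (v * a) := by ring
        _ = 0 := h2'
    have hur : u * r ∈ Submodule.annihilator (psContent f) := by
      have h4 : u * r = (u * r + v * r') - v * r' := by ring
      rw [h4]
      exact Submodule.sub_mem _ hmem hvr'
    apply hrD
    have h5 : r = ↑hu.unit⁻¹ * (u * r) := by
      rw [← mul_assoc]
      nth_rewrite 2 [← IsUnit.unit_spec hu]
      rw [Units.inv_mul, one_mul]
    rw [h5]
    exact Submodule.smul_mem _ _ hur

end Wronskian

section Core

variable {A : Type*} [CommRing A] [IsArtinianRing A] [IsNoetherianRing A] [IsLocalRing A] {n : ℕ}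

theorem core_principal {x₀ : A} (hx0 : x₀ ≠ 0)
    (hx : Submodule.annihilator (IsLocalRing.maximalIdeal A) = Ideal.span {x₀})
    (f : MvPowerSeries (Fin n) A)
    (hf : ∀ g, psContent (f * g) = psContent f * psContent g) :
    (psContent f).IsPrincipal := by
  obtain ⟨s, hs⟩ := IsArtinianRing.isNilpotent_jacobson_bot (R := A)
  rw [IsLocalRing.jacobson_eq_maximalIdeal ⊥ bot_ne_top] at hs
  set c := psContent f with hc
  by_cases hcM : c ≤ IsLocalRing.maximalIdeal A * c
  · have hbot : c ≤ (⊥ : Ideal A) := le_of_le_sup_smul hs (by rwa [sup_bot_eq])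
    refine ⟨⟨0, ?_⟩⟩
    rw [le_bot_iff.mp hbot]
    exact (Ideal.span_zero).symm
  · have hlt : IsLocalRing.maximalIdeal A * c < c := lt_of_le_not_ge Ideal.mul_le_right hcM
    obtain ⟨a, hac, haM⟩ := SetLike.exists_of_lt hlt
    have hnm := no_middle ⟨s, hs⟩ hx (IsLocalRing.maximalIdeal A * c) c
      Ideal.mul_le_right (wronskian_collapse hx hf)
    have hKc : IsLocalRing.maximalIdeal A * c ⊔ Ideal.span {a} = c := by
      rcases lt_or_eq_of_le (sup_le hlt.le
          (Ideal.span_le.mpr (Set.singleton_subset_iff.mpr hac))) with h | h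
      · exfalso
        refine hnm _ ⟨?_, h⟩
        refine lt_of_le_of_ne le_sup_left (fun heq => haM ?_)
        have : a ∈ IsLocalRing.maximalIdeal A * c ⊔ Ideal.span {a} :=
          Submodule.mem_sup_right (Ideal.mem_span_singleton_self a)
        rwa [← heq] at this
      · exact h
    have hfin : c = Ideal.span {a} := by
      apply le_antisymm
      · exact le_of_le_sup_smul hs hKc.ge
      · exact Ideal.span_le.mpr (Set.singleton_subset_iff.mpr hac)
    exact ⟨⟨a, hfin⟩⟩

end Core


section Glue

lemma krull_le {S : Type*} [CommRing S] [IsNoetherianRing S] [IsLocalRing S]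
    (J K : Ideal S) (h : ∀ N : ℕ, K ≤ J ⊔ (IsLocalRing.maximalIdeal S) ^ N) : K ≤ J := by
  by_cases hJ : J = ⊤
  · rw [hJ]; exact le_top
  intro x hx
  haveI : Nontrivial (S ⧸ J) := Ideal.Quotient.nontrivial_iff.mpr hJ
  haveI : IsLocalRing (S ⧸ J) := IsLocalRing.of_surjective' _ Ideal.Quotient.mk_surjective
  have hMq : Ideal.map (Ideal.Quotient.mk J) (IsLocalRing.maximalIdeal S) ≤
      IsLocalRing.maximalIdeal (S ⧸ J) := by
    rw [Ideal.map_le_iff_le_comap]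
    intro z hz
    rw [Ideal.mem_comap, IsLocalRing.mem_maximalIdeal, mem_nonunits_iff]
    intro hunit
    obtain ⟨w, hw⟩ := isUnit_iff_exists_inv.mp hunit
    obtain ⟨y, rfl⟩ := Ideal.Quotient.mk_surjective w
    rw [← map_mul, ← map_one (Ideal.Quotient.mk J)] at hw
    have hzy : z * y - 1 ∈ J := (Ideal.Quotient.eq).mp hw
    have h1 : (1 : S) ∈ IsLocalRing.maximalIdeal S := by
      have hJM : J ≤ IsLocalRing.maximalIdeal S := IsLocalRing.le_maximalIdeal hJ
      have h2 : z * y - (z * y - 1) = 1 := by ring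
      rw [← h2]
      exact Submodule.sub_mem _ (Ideal.mul_mem_right y _ hz) (hJM hzy)
    exact (IsLocalRing.maximalIdeal.isMaximal S).ne_top ((Ideal.eq_top_iff_one _).mpr h1)
  have hmem : ∀ N, Ideal.Quotient.mk J x ∈ (IsLocalRing.maximalIdeal (S ⧸ J)) ^ N := by
    intro N
    have h2 : Ideal.Quotient.mk J x ∈
        Ideal.map (Ideal.Quotient.mk J) (J ⊔ (IsLocalRing.maximalIdeal S) ^ N) :=
      Ideal.mem_map_of_mem _ (h N hx)
    rw [Ideal.map_sup, Ideal.map_quotient_self, bot_sup_eq, Ideal.map_pow] at h2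
    exact Ideal.pow_right_mono hMq N h2
  have hbot : Ideal.Quotient.mk J x ∈ (⊥ : Ideal (S ⧸ J)) := by
    rw [← Ideal.iInf_pow_eq_bot_of_isLocalRing (IsLocalRing.maximalIdeal (S ⧸ J))
      (IsLocalRing.maximalIdeal.isMaximal _).ne_top]
    exact Submodule.mem_iInf _ |>.mpr hmem
  rwa [Ideal.mem_bot, Ideal.Quotient.eq_zero_iff_mem] at hbot

lemma quot_surjective {R : Type*} [CommRing R] (m : Ideal R) [hm : m.IsMaximal]
    (I : Ideal (Localization m.primeCompl)) {t : ℕ}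
    (ht : (IsLocalRing.maximalIdeal (Localization m.primeCompl)) ^ t ≤ I) :
    Function.Surjective
      ⇑((Ideal.Quotient.mk I).comp (algebraMap R (Localization m.primeCompl))) := by
  haveI := hm.isPrime
  set S := Localization m.primeCompl
  set φ := (Ideal.Quotient.mk I).comp (algebraMap R S) with hφ
  have halg : ∀ α ∈ m, algebraMap R S α ∈ IsLocalRing.maximalIdeal S := by
    intro α hα
    have hcm : Ideal.comap (algebraMap R S) (IsLocalRing.maximalIdeal S) = m :=
      Localization.AtPrime.comap_maximalIdeal
    rw [← hcm] at hα
    exact hα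
  have hkey : ∀ s : m.primeCompl, ∃ rs : R, φ ((s : R) * rs) = 1 := by
    intro s
    obtain ⟨β, i, hi, hβ⟩ := hm.exists_inv s.2
    refine ⟨β * (∑ k ∈ Finset.range t, i ^ k), ?_⟩
    have hsβ : (s : R) * β = 1 - i := by linear_combination hβ
    have hcalc : (s : R) * (β * ∑ k ∈ Finset.range t, i ^ k) = 1 - i ^ t := by
      have hgeom := geom_sum_mul i t
      calc (s : R) * (β * ∑ k ∈ Finset.range t, i ^ k)
          = ((s : R) * β) * ∑ k ∈ Finset.range t, i ^ k := by ring
        _ = (1 - i) * ∑ k ∈ Finset.range t, i ^ k := by rw [hsβ]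
        _ = 1 - i ^ t := by linear_combination -hgeom
    rw [hcalc]
    have hit : φ (i ^ t) = 0 := by
      rw [hφ, RingHom.comp_apply, Ideal.Quotient.eq_zero_iff_mem, map_pow]
      exact ht (Ideal.pow_mem_pow (halg i hi) t)
    rw [map_sub, map_one, hit, sub_zero]
  intro y
  obtain ⟨xq, rfl⟩ := Ideal.Quotient.mk_surjective y
  obtain ⟨⟨r, s⟩, hmk⟩ := IsLocalization.mk'_surjective m.primeCompl xq
  obtain ⟨rs, hrs⟩ := hkey s
  refine ⟨r * rs, ?_⟩
  have hspec : xq * algebraMap R S s = algebraMap R S r := by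
    rw [← hmk]
    exact IsLocalization.mk'_spec S r s
  calc φ (r * rs) = Ideal.Quotient.mk I (algebraMap R S r) * φ rs := by
        rw [hφ]; simp [map_mul]
    _ = Ideal.Quotient.mk I (xq * algebraMap R S s) * φ rs := by rw [hspec]
    _ = Ideal.Quotient.mk I xq * φ ((s : R) * rs) := by
        rw [hφ]; simp only [RingHom.comp_apply, map_mul]; ring
    _ = Ideal.Quotient.mk I xq := by rw [hrs, mul_one]

end Glue

end GPAux

/-- Let `R` be Noetherian and locally approximately Gorenstein.  If
`f ∈ R[[x₁,…,xₙ]]` is Gaussian over `R`, then `c(f)` is locally principal. -/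
theorem locally_principal_content_of_gaussian_powerSeries (R : Type*) [CommRing R]
    [IsNoetherianRing R] (hag : IsLocallyApproximatelyGorenstein R) (n : ℕ)
    (f : MvPowerSeries (Fin n) R)
    (hf : ∀ g : MvPowerSeries (Fin n) R,
      psContent (f * g) = psContent f * psContent g) :
    ∀ (m : Ideal R) (_ : m.IsMaximal),
      (Ideal.map (algebraMap R (Localization m.primeCompl)) (psContent f)).IsPrincipal := by
  intro m hm
  classical
  haveI := hm.isPrime
  set S := Localization m.primeCompl with hS
  haveI : IsNoetherianRing S :=
    IsLocalization.isNoetherianRing m.primeCompl S inferInstance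
  set c := psContent f with hc
  set cS := Ideal.map (algebraMap R S) c with hcS
  -- a finite, nonempty generating set for c
  obtain ⟨T0, hT0⟩ := (IsNoetherian.noetherian c : c.FG)
  set T' : Finset R := insert 0 T0 with hT'def
  have hT' : Ideal.span (T' : Set R) = c := by
    rw [hT'def, Finset.coe_insert]
    show Submodule.span R (insert 0 (↑T0 : Set R)) = c
    rw [Submodule.span_insert_zero]
    exact hT0
  have hT'ne : T'.Nonempty := ⟨0, Finset.mem_insert_self 0 T0⟩
  have hT'c : ∀ a ∈ T', a ∈ c := fun a ha => hT' ▸ Ideal.subset_span ha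
  -- key step: for each N, some generator works modulo M^N
  have key : ∀ N : ℕ, ∃ a ∈ T',
      cS ≤ Ideal.span {algebraMap R S a} ⊔ (IsLocalRing.maximalIdeal S) ^ N := by
    intro N
    obtain ⟨I, hIle, hIprim, hIrad, hIG⟩ := hag m hm N
    obtain ⟨hArt, hLoc, x₀, hx0, hx⟩ := hIG
    haveI := hArt
    haveI := hLoc
    obtain ⟨t, ht⟩ := Ideal.exists_pow_le_of_le_radical_of_fg
      (hIrad.ge : IsLocalRing.maximalIdeal S ≤ I.radical)
      (IsNoetherian.noetherian (IsLocalRing.maximalIdeal S))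
    set π := Ideal.Quotient.mk I with hπ
    set φ := π.comp (algebraMap R S) with hφ
    have hφsurj : Function.Surjective ⇑φ := GPAux.quot_surjective m I ht
    have hGq := GPAux.gaussian_of_surjective φ hφsurj f hf
    have hprinc : (psContent (MvPowerSeries.map φ f)).IsPrincipal :=
      GPAux.core_principal hx0 hx _ hGq
    have hcontent : psContent (MvPowerSeries.map φ f) =
        Ideal.span ((T'.image ⇑φ : Finset (S ⧸ I)) : Set (S ⧸ I)) := by
      rw [GPAux.psContent_map, ← hc, ← hT', Ideal.map_span, Finset.coe_image]
    obtain ⟨b, hbT, hspan⟩ := GPAux.local_span_finset (T'.image ⇑φ)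
      (hT'ne.image ⇑φ) (hcontent ▸ hprinc)
    obtain ⟨a, haT, rfl⟩ := Finset.mem_image.mp hbT
    refine ⟨a, haT, ?_⟩
    have h1 : Ideal.map π cS = Ideal.map π (Ideal.span {algebraMap R S a}) := by
      rw [hcS, Ideal.map_map, ← hφ, ← GPAux.psContent_map, hcontent, hspan, Ideal.map_span]
      congr 1
      simp [hφ]
    have h2 : cS ≤ Ideal.comap π (Ideal.map π cS) := Ideal.le_comap_map
    rw [h1, Ideal.comap_map_of_surjective π Ideal.Quotient.mk_surjective] at h2
    have h3 : Ideal.comap π (⊥ : Ideal (S ⧸ I)) = I := Ideal.mk_ker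
    rw [h3] at h2
    exact h2.trans (sup_le_sup_left hIle _)
  choose sel hsel1 hsel2 using key
  set sel' : ℕ → {x // x ∈ T'} := fun N => ⟨sel N, hsel1 N⟩ with hsel'
  obtain ⟨a, ha⟩ := Finite.exists_infinite_fiber sel'
  have hinf : (sel' ⁻¹' {a}).Infinite := Set.infinite_coe_iff.mp ha
  have hbound : ∀ N, cS ≤ Ideal.span {algebraMap R S a.1} ⊔ (IsLocalRing.maximalIdeal S) ^ N := by
    intro N
    obtain ⟨N', hN'mem, hNN'⟩ := hinf.exists_gt N
    have hselN : sel N' = a.1 := congrArg Subtype.val hN'mem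
    refine (hsel2 N').trans ?_
    rw [hselN]
    exact sup_le_sup_left (Ideal.pow_le_pow_right hNN'.le) _
  have hle : cS ≤ Ideal.span {algebraMap R S a.1} :=
    GPAux.krull_le _ _ hbound
  have hge : Ideal.span {algebraMap R S a.1} ≤ cS := by
    rw [Ideal.span_le, Set.singleton_subset_iff]
    exact Ideal.mem_map_of_mem _ (hT'c a.1 a.2)
  exact ⟨⟨algebraMap R S a.1, le_antisymm hle hge⟩⟩
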